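/- Let (V, P) be a finite irreducible Markov chain with stationary distribution π and at least two states, and let π_* = min_x π(x). For f : [0,1] → ℝ and r ∈ [π_*, 1) let C_f(r) = max{C_f(A) : A ⊆ V nonempty and proper, π(A) ≤ r}. Then for all r ∈ [π_*, 1): (i) with f₁(a) = a(1−a): 1 − C_{f₁}(r) ≥ 8·Δ_min·Ψ_min, and moreover 1 − C_{f₁}(r) ≥ 2·Δ_min·Ψ_min/(r(1−r)) whenever r ≤ 1/2; (ii) with f₂(a) = a·log(1/a) (and f₂(0) = 0): 1 − C_{f₂}(r) ≥ e·Δ_min·Ψ_min, and moreover 1 − C_{f₂}(r) ≥ Δ_min·Ψ_min/(2r²·log(1/r)) whenever r ≤ e^{−1/2}; (iii) with f₃(a) = √(a(1−a)): 1 − C_{f₃}(r) ≥ Δ_min·Ψ_min/(4r²(1−r)²) whenever r ≤ 1/2, and 1 − C_{f₃}(r) ≥ 4·Δ_min·Ψ_min whenever r > 1/2. -/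

import Mathlib

open scoped Classical

noncomputable section

namespace Stmt15

variable {V : Type*} [Fintype V]

/-- measure of a finite set of states under `pi`. -/
def meas (pi : V → ℝ) (A : Finset V) : ℝ := ∑ x ∈ A, pi x

/-- ergodic flow `Q(A,y) = ∑_{x∈A} π(x)P(x,y)` from a set to a point. -/
def flowPt (P : V → V → ℝ) (pi : V → ℝ) (A : Finset V) (y : V) : ℝ :=
  ∑ x ∈ A, pi x * P x y

/-- the evolving set `A_u = {y : Q(A,y) ≥ u·π(y)}`. -/
def evolve (P : V → V → ℝ) (pi : V → ℝ) (A : Finset V) (u : ℝ) : Finset V :=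
  Finset.univ.filter fun y => u * pi y ≤ flowPt P pi A y

/-- `f`-congestion of a set: `C_f(A) = (∫₀¹ f(π(A_u)) du)/f(π(A))`. -/
def fCong (f : ℝ → ℝ) (P : V → V → ℝ) (pi : V → ℝ) (A : Finset V) : ℝ :=
  (∫ u in (0:ℝ)..1, f (meas pi (evolve P pi A u))) / f (meas pi A)

/-- `C_f(r) = max{C_f(A) : A nonempty proper, π(A) ≤ r}`. -/
def fCongR (f : ℝ → ℝ) (P : V → V → ℝ) (pi : V → ℝ) (r : ℝ) : ℝ :=
  sSup {c | ∃ A : Finset V, A.Nonempty ∧ A ≠ Finset.univ ∧ meas pi A ≤ r ∧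
    c = fCong f P pi A}

/-- modified ergodic flow `Ψ(A) = (1/2)∫₀¹ |π(A_u) − π(A)| du`. -/
def modFlow (P : V → V → ℝ) (pi : V → ℝ) (A : Finset V) : ℝ :=
  (1 / 2) * ∫ u in (0:ℝ)..1, |meas pi (evolve P pi A u) - meas pi A|

/-- `Ψ_min = min{Ψ(A) : A a nonempty proper subset}`. -/
def psiMin (P : V → V → ℝ) (pi : V → ℝ) : ℝ :=
  sInf {r | ∃ A : Finset V, A.Nonempty ∧ A ≠ Finset.univ ∧ r = modFlow P pi A}

/-- `Δ_min = min{|π(A) − π(B)| : π(A) ≠ π(B)}`. -/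
def deltaMin (pi : V → ℝ) : ℝ :=
  sInf {r | ∃ A B : Finset V, meas pi A ≠ meas pi B ∧ r = |meas pi A - meas pi B|}

/-- `π_* = min_x π(x)`. -/
def piStar (pi : V → ℝ) : ℝ := ⨅ x, pi x


open Real Set MeasureTheory


lemma le_of_sq_le_sq {a b : ℝ} (hb : 0 ≤ b) (h : a^2 ≤ b^2) (ha : 0 ≤ a) : a ≤ b := by
  nlinarith

lemma mul_log_inv_le_inv_e {x : ℝ} (hx : 0 < x) :
    x * Real.log (1/x) ≤ (Real.exp 1)⁻¹ := by
  have he : (0:ℝ) < Real.exp 1 := Real.exp_pos 1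
  have h := Real.log_le_sub_one_of_pos (show 0 < (Real.exp 1 * x)⁻¹ by positivity)
  rw [Real.log_inv, Real.log_mul (ne_of_gt he) (ne_of_gt hx), Real.log_exp] at h
  rw [one_div, Real.log_inv]
  have h2 : -Real.log x ≤ (Real.exp 1 * x)⁻¹ := by linarith
  have h3 : x * -Real.log x ≤ x * (Real.exp 1 * x)⁻¹ :=
    mul_le_mul_of_nonneg_left h2 hx.le
  have h4 : x * (Real.exp 1 * x)⁻¹ = (Real.exp 1)⁻¹ := by
    field_simp
  nlinarith

lemma entropy_sym_ineq {x : ℝ} (h0 : 0 ≤ x) (h1 : x ≤ 1) :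
    x^2/2 ≤ (1+x)*Real.log (1+x) + (1-x)*Real.log (1-x) := by
  rcases eq_or_lt_of_le h1 with rfl | hx1
  · have := Real.log_two_gt_d9
    norm_num
    nlinarith
  · set F : ℝ → ℝ := fun t => (1+t)*Real.log (1+t) + (1-t)*Real.log (1-t) - t^2/2 with hF
    have hd : ∀ t ∈ Ioo (0:ℝ) x, HasDerivAt F (Real.log (1+t) - Real.log (1-t) - t) t := by
      intro t ht
      have ht1 : (0:ℝ) < 1 + t := by linarith [ht.1]
      have ht2 : (0:ℝ) < 1 - t := by linarith [ht.2]
      have hb1 : HasDerivAt (fun t : ℝ => 1 + t) 1 t := by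
        simpa using (hasDerivAt_id t).const_add 1
      have hb2 : HasDerivAt (fun t : ℝ => 1 - t) (-1) t := by
        exact (hasDerivAt_id' t).const_sub 1
      have d1 : HasDerivAt (fun t : ℝ => (1+t)*Real.log (1+t))
          (1 * Real.log (1+t) + (1+t) * ((1+t)⁻¹ * 1)) t :=
        (hb1).mul ((Real.hasDerivAt_log (ne_of_gt ht1)).comp t hb1)
      have d2 : HasDerivAt (fun t : ℝ => (1-t)*Real.log (1-t))
          ((-1) * Real.log (1-t) + (1-t) * ((1-t)⁻¹ * (-1))) t :=
        (hb2).mul ((Real.hasDerivAt_log (ne_of_gt ht2)).comp t hb2)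
      have d3 : HasDerivAt (fun t : ℝ => t^2/2) t t := by
        simpa using ((hasDerivAt_pow 2 t).div_const 2)
      have := (d1.add d2).sub d3
      refine this.congr_deriv ?_
      have e1 : (1+t)*((1+t)⁻¹*1) = 1 := by rw [mul_one, mul_inv_cancel₀ (ne_of_gt ht1)]
      have e2 : (1-t)*((1-t)⁻¹*(-1)) = -1 := by
        rw [← mul_assoc, mul_inv_cancel₀ (ne_of_gt ht2), one_mul]
      rw [e1, e2]
      ring
    have hcF : Continuous F := by
      have c1 : Continuous fun t : ℝ => (1+t)*Real.log (1+t) := by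
        exact Real.continuous_mul_log.comp (by fun_prop : Continuous fun t : ℝ => 1 + t)
      have c2 : Continuous fun t : ℝ => (1-t)*Real.log (1-t) := by
        exact Real.continuous_mul_log.comp (by fun_prop : Continuous fun t : ℝ => 1 - t)
      exact (c1.add c2).sub ((continuous_pow 2).div_const 2)
    have hmono : MonotoneOn F (Icc 0 x) := by
      apply monotoneOn_of_deriv_nonneg (convex_Icc 0 x) hcF.continuousOn
      · intro t ht
        rw [interior_Icc] at ht
        exact ((hd t ht).differentiableAt).differentiableWithinAt
      · intro t ht
        rw [interior_Icc] at ht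
        rw [(hd t ht).deriv]
        have ht1 : (0:ℝ) ≤ Real.log (1 + t) := Real.log_nonneg (by linarith [ht.1])
        have ht2 : Real.log (1 - t) ≤ (1 - t) - 1 :=
          Real.log_le_sub_one_of_pos (by linarith [ht.2])
        linarith
    have h01 : F 0 ≤ F x := hmono ⟨le_refl 0, h0⟩ ⟨h0, le_refl x⟩ h0
    have hF0 : F 0 = 0 := by simp [hF]
    simp only [hF] at h01 hF0
    linarith

lemma sq_mul_log_inv_mono {M r : ℝ} (hM : 0 < M) (hMr : M ≤ r) (hr : r ≤ Real.exp (-(1/2))) :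
    M^2 * Real.log (1/M) ≤ r^2 * Real.log (1/r) := by
  have hr0 : 0 < r := lt_of_lt_of_le hM hMr
  set F : ℝ → ℝ := fun t => t^2 * Real.log (1/t) with hF
  have hd : ∀ t ∈ Ioo M r, HasDerivAt F (2*t*Real.log (1/t) - t) t := by
    intro t ht
    have ht0 : 0 < t := lt_trans hM ht.1
    have d1 : HasDerivAt (fun t : ℝ => t^2) (2*t) t := by simpa using hasDerivAt_pow 2 t
    have d2 : HasDerivAt (fun t : ℝ => Real.log (1/t)) (-t⁻¹) t := by
      have : HasDerivAt Real.log t⁻¹ t := Real.hasDerivAt_log (ne_of_gt ht0)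
      have h' := this.comp t ((hasDerivAt_id t))
      -- easier: log(1/t) = -log t
      have heq : (fun t : ℝ => Real.log (1/t)) = fun t : ℝ => -Real.log t := by
        funext s; rw [one_div, Real.log_inv]
      rw [heq]
      exact this.neg
    have := d1.mul d2
    refine this.congr_deriv ?_
    have : Real.log (1/t) = -Real.log t := by rw [one_div, Real.log_inv]
    rw [this]
    rw [show t^2 * -t⁻¹ = -t by
      rw [pow_two, mul_neg, mul_assoc, mul_inv_cancel₀ (ne_of_gt ht0), mul_one]]
    ring
  have hcF : ContinuousOn F (Icc M r) := by
    apply ContinuousOn.mul (Continuous.continuousOn (by continuity))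
    have : ∀ t ∈ Icc M r, t ≠ 0 := fun t ht => ne_of_gt (lt_of_lt_of_le hM ht.1)
    exact ContinuousOn.log (continuousOn_const.div continuousOn_id fun t ht => this t ht)
      (fun t ht => by
        have := this t ht
        positivity)
  have hmono : MonotoneOn F (Icc M r) := by
    apply monotoneOn_of_deriv_nonneg (convex_Icc M r) hcF
    · intro t ht
      rw [interior_Icc] at ht
      exact ((hd t ht).differentiableAt).differentiableWithinAt
    · intro t ht
      rw [interior_Icc] at ht
      rw [(hd t ht).deriv]
      have ht0 : 0 < t := lt_trans hM ht.1
      have hlt : Real.log t ≤ -(1/2) := by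
        rw [← Real.log_exp (-(1/2))]
        exact Real.log_le_log ht0 (le_of_lt (lt_of_lt_of_le ht.2 hr))
      have : Real.log (1/t) = -Real.log t := by rw [one_div, Real.log_inv]
      rw [this]
      nlinarith
  have := hmono (left_mem_Icc.mpr hMr) (right_mem_Icc.mpr hMr) hMr
  simpa [hF] using this






/-- core estimate for `f₂`: `S₂ ≥ Δ²/(2M)` -/
lemma scalar2core {M Δ : ℝ} (hM0 : 0 < M) (hM1 : M < 1) (hΔ0 : 0 < Δ) (hΔM : Δ ≤ M)
    (hΔ1 : Δ ≤ 1 - M) :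
    Δ^2/(2*M) ≤ 2*(M*Real.log (1/M)) - ((M+Δ)*Real.log (1/(M+Δ)))
      - ((M-Δ)*Real.log (1/(M-Δ))) := by
  obtain ⟨x, hx0, hx1, hMx, hMx'⟩ :
      ∃ x : ℝ, 0 < x ∧ x ≤ 1 ∧ M * (1+x) = M + Δ ∧ M * (1-x) = M - Δ := by
    refine ⟨Δ/M, by positivity, by rw [div_le_one hM0]; exact hΔM, by field_simp, by
      field_simp⟩
  have key := entropy_sym_ineq hx0.le hx1
  have e1 : Real.log (M+Δ) = Real.log M + Real.log (1+x) := by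
    rw [← hMx, Real.log_mul (ne_of_gt hM0) (by positivity)]
  have e2 : (M-Δ) * Real.log (M-Δ) = (M-Δ) * Real.log M + (M-Δ) * Real.log (1-x) := by
    rcases eq_or_lt_of_le hΔM with heq | hlt
    · have hMd : M - Δ = 0 := by rw [heq]; ring
      rw [hMd]; simp
    · have h1 : 0 < M - Δ := by linarith
      have h2 : 0 < 1 - x := by
        have hx2 : 1 - x = (M-Δ)/M := by
          rw [eq_div_iff (ne_of_gt hM0)]; linear_combination hMx'
        rw [hx2]; positivity
      rw [← hMx', Real.log_mul (ne_of_gt hM0) (ne_of_gt h2)]; ring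
  simp only [one_div, Real.log_inv]
  have key' := mul_le_mul_of_nonneg_left key hM0.le
  have hMxd : M * x = Δ := by linarith [hMx]
  have hxx : Δ^2/(2*M) ≤ M * (x^2/2) := by
    rw [div_le_iff₀ (by positivity : (0:ℝ) < 2*M)]
    have h9 : Δ^2 = M * (x^2/2)*(2*M) := by rw [← hMxd]; ring
    linarith
  calc Δ^2/(2*M) ≤ M * (x^2/2) := hxx
    _ ≤ M * ((1+x)*Real.log (1+x) + (1-x)*Real.log (1-x)) := key'
    _ = 2*(M * -Real.log M) - ((M+Δ) * -Real.log (M+Δ)) - ((M-Δ) * -Real.log (M-Δ)) := by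
        linear_combination -((M+Δ) * e1) - e2 + Real.log (1+x) * hMx + Real.log (1-x) * hMx'

/-- shared setup facts for the `f₃` estimates -/
lemma sqrt_setup {M Δ : ℝ} (hM0 : 0 < M) (hM1 : M < 1) (hΔ0 : 0 < Δ) (hΔM : Δ ≤ M)
    (hΔ1 : Δ ≤ 1 - M) :
    let s := Real.sqrt (M*(1-M)); let a := Real.sqrt ((M+Δ)*(1-(M+Δ)))
    let b := Real.sqrt ((M-Δ)*(1-(M-Δ)))
    0 < s ∧ 0 ≤ a ∧ 0 ≤ b ∧ s^2 = M*(1-M) ∧ a^2 = (M+Δ)*(1-(M+Δ)) ∧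
      b^2 = (M-Δ)*(1-(M-Δ)) := by
  intro s a b
  have h1 : (0:ℝ) ≤ M*(1-M) := by nlinarith
  have h2 : (0:ℝ) ≤ (M+Δ)*(1-(M+Δ)) := by nlinarith
  have h3 : (0:ℝ) ≤ (M-Δ)*(1-(M-Δ)) := by nlinarith
  exact ⟨Real.sqrt_pos.mpr (by nlinarith), Real.sqrt_nonneg _, Real.sqrt_nonneg _,
    Real.sq_sqrt h1, Real.sq_sqrt h2, Real.sq_sqrt h3⟩

/-- core estimate for `f₃`, global version: `S₃ ≥ Δ²/s ≥ 4Δ²·s` -/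
lemma scalar3b {M Δ : ℝ} (hM0 : 0 < M) (hM1 : M < 1) (hΔ0 : 0 < Δ) (hΔM : Δ ≤ M)
    (hΔ1 : Δ ≤ 1 - M) :
    4*Δ^2*Real.sqrt (M*(1-M)) ≤ 2*Real.sqrt (M*(1-M)) - Real.sqrt ((M+Δ)*(1-(M+Δ)))
      - Real.sqrt ((M-Δ)*(1-(M-Δ))) := by
  obtain ⟨hs0, ha0, hb0, hs2, ha2, hb2⟩ := sqrt_setup hM0 hM1 hΔ0 hΔM hΔ1
  set s := Real.sqrt (M*(1-M))
  set a := Real.sqrt ((M+Δ)*(1-(M+Δ)))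
  set b := Real.sqrt ((M-Δ)*(1-(M-Δ)))
  have hD2 : Δ^2 ≤ s^2 := by nlinarith
  have hab2 : (a*b)^2 = (s^2-Δ^2)^2 - Δ^2*(1-2*M)^2 := by
    rw [mul_pow, ha2, hb2, hs2]; ring
  have hab : a*b ≤ s^2 - Δ^2 := by
    refine le_of_sq_le_sq (by linarith) ?_ (mul_nonneg ha0 hb0)
    nlinarith [sq_nonneg (Δ*(1-2*M))]
  have hsum : (a+b)^2 = 2*(s^2 - Δ^2) + 2*(a*b) := by
    linear_combination ha2 + hb2 - 2*hs2
  have hsum2 : (s*(a+b))^2 ≤ (2*s^2 - Δ^2)^2 := by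
    have e1 : (s*(a+b))^2 = s^2*((a+b)^2) := by ring
    rw [e1, hsum]
    nlinarith [sq_nonneg Δ, sq_nonneg s, mul_le_mul_of_nonneg_left hab (sq_nonneg s)]
  have hsum' : s*(a+b) ≤ 2*s^2 - Δ^2 :=
    le_of_sq_le_sq (by nlinarith) hsum2 (by positivity)
  have hsle : s^2 ≤ 1/4 := by nlinarith [sq_nonneg (1-2*M)]
  refine le_of_mul_le_mul_right ?_ hs0
  nlinarith [sq_nonneg Δ]

set_option maxHeartbeats 1000000 in
/-- core estimate for `f₃`, small-set version: `S₃ ≥ Δ²/(4·s³)` stated with cleared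
denominators -/
lemma scalar3core {M Δ : ℝ} (hM0 : 0 < M) (hM1 : M < 1) (hΔ0 : 0 < Δ) (hΔM : Δ ≤ M)
    (hΔ1 : Δ ≤ 1 - M) :
    Δ^2 ≤ (2*Real.sqrt (M*(1-M)) - Real.sqrt ((M+Δ)*(1-(M+Δ)))
      - Real.sqrt ((M-Δ)*(1-(M-Δ)))) * (4 * Real.sqrt (M*(1-M))^3) := by
  obtain ⟨hs0, ha0, hb0, hs2, ha2, hb2⟩ := sqrt_setup hM0 hM1 hΔ0 hΔM hΔ1
  set s := Real.sqrt (M*(1-M))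
  set a := Real.sqrt ((M+Δ)*(1-(M+Δ)))
  set b := Real.sqrt ((M-Δ)*(1-(M-Δ)))
  have hD2 : Δ^2 ≤ s^2 := by nlinarith
  have hΔ2s : Δ ≤ 2*s^2 := by
    rcases le_or_gt M (1/2) with h | h
    · nlinarith
    · nlinarith
  have hsle : s^2 ≤ 1/4 := by nlinarith [sq_nonneg (1-2*M)]
  have hab2 : (a*b)^2 = (s^2-Δ^2)^2 - Δ^2*(1-2*M)^2 := by
    rw [mul_pow, ha2, hb2, hs2]; ring
  have hsum : (a+b)^2 = 2*(s^2 - Δ^2) + 2*(a*b) := by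
    linear_combination ha2 + hb2 - 2*hs2
  have key : 4*s^3*(a+b) ≤ 8*s^4 - Δ^2 := by
    have hW0 : 0 ≤ 8*s^4 - Δ^2 := by nlinarith [sq_nonneg Δ, sq_nonneg s]
    rcases eq_or_lt_of_le hD2 with heq | hX
    · -- degenerate: Δ² = s² forces M = Δ = 1/2 and a = b = 0
      have hM12 : M = 1/2 := by nlinarith
      have hMD : Δ = 1/2 := by nlinarith
      have hda : a = 0 := by
        have : a^2 = 0 := by rw [ha2, hM12, hMD]; ring
        exact (pow_eq_zero_iff two_ne_zero).mp this
      have hdb : b = 0 := by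
        have : b^2 = 0 := by rw [hb2, hM12, hMD]; ring
        exact (pow_eq_zero_iff two_ne_zero).mp this
      rw [hda, hdb]
      nlinarith
    · -- main case: X = s² - Δ² > 0
      have hX' : 0 < s^2 - Δ^2 := by linarith
      have habX : 2*(s^2-Δ^2)*(a*b) ≤ 2*(s^2-Δ^2)^2 - Δ^2*(1-2*M)^2 := by
        have h1 : 0 ≤ 2*(s^2-Δ^2)*(a*b) := by positivity
        have h2 : (2*(s^2-Δ^2)*(a*b))^2 = 4*(s^2-Δ^2)^2*((s^2-Δ^2)^2 - Δ^2*(1-2*M)^2) := by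
          linear_combination (4*(s^2-Δ^2)^2) * hab2
        refine le_of_sq_le_sq ?_ ?_ h1
        · nlinarith [hab2, sq_nonneg (a*b)]
        · rw [h2]; nlinarith [sq_nonneg (Δ^2*(1-2*M)^2)]
      have hsumX : (s^2-Δ^2)*((a+b)^2) =
          2*(s^2-Δ^2)^2 + 2*(s^2-Δ^2)*(a*b) := by
        linear_combination (s^2-Δ^2) * hsum
      have h4 : (s^2-Δ^2)*((a+b)^2) ≤ 4*(s^2-Δ^2)^2 - Δ^2*(1-2*M)^2 := by
        linarith [habX, hsumX]
      have hfinal2 : (4*s^3*(a+b))^2 ≤ (8*s^4 - Δ^2)^2 := by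
        have hs1m : (1:ℝ) - 4*s^2 = (1-2*M)^2 := by linear_combination -4*hs2
        have t1 : 0 ≤ Δ^4 * (s^2 - Δ^2) := by positivity
        have h1m : (0:ℝ) ≤ 1 - 4*s^2 := by rw [hs1m]; positivity
        have t2 : 0 ≤ 16*s^4*Δ^4*(1-4*s^2) :=
          mul_nonneg (by positivity) h1m
        have h4' : (s^2-Δ^2)*((a+b)^2) ≤ 4*(s^2-Δ^2)^2 - Δ^2*(1-4*s^2) := by
          rw [hs1m]; exact h4
        have hpoly : 16*s^6*(4*(s^2-Δ^2)^2 - Δ^2*(1-4*s^2)) ≤ (s^2-Δ^2) * (8*s^4 - Δ^2)^2 := by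
          nlinarith [t1, t2]
        have hstep : (s^2-Δ^2) * ((4*s^3*(a+b))^2) ≤ (s^2-Δ^2) * (8*s^4 - Δ^2)^2 := by
          have h16 : (s^2-Δ^2) * ((4*s^3*(a+b))^2) = 16*s^6*((s^2-Δ^2)*((a+b)^2)) := by ring
          rw [h16]
          calc 16*s^6*((s^2-Δ^2)*((a+b)^2))
              ≤ 16*s^6*(4*(s^2-Δ^2)^2 - Δ^2*(1-4*s^2)) :=
                mul_le_mul_of_nonneg_left h4' (by positivity)
            _ ≤ (s^2-Δ^2) * (8*s^4 - Δ^2)^2 := hpoly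
        exact le_of_mul_le_mul_left hstep hX'
      exact le_of_sq_le_sq hW0 hfinal2 (by positivity)
  nlinarith [key]

lemma concave_f1 : ConcaveOn ℝ (Icc (0:ℝ) 1) (fun a => a * (1 - a)) := by
  refine ⟨convex_Icc _ _, ?_⟩
  intro x _ y _ p q hp hq hpq
  simp only [smul_eq_mul]
  have hq' : q = 1 - p := by linarith
  subst hq'
  nlinarith [mul_nonneg (mul_nonneg hp (by linarith : (0:ℝ) ≤ 1 - p)) (sq_nonneg (x - y))]

lemma concave_f2 : ConcaveOn ℝ (Icc (0:ℝ) 1) (fun a => a * Real.log (1/a)) := by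
  have heq : (fun a : ℝ => a * Real.log (1/a)) = Real.negMulLog := by
    funext t
    rw [Real.negMulLog, one_div, Real.log_inv]
    ring
  rw [heq]
  exact Real.concaveOn_negMulLog.subset (fun t ht => ht.1) (convex_Icc _ _)

lemma concave_f3 : ConcaveOn ℝ (Icc (0:ℝ) 1) (fun a => Real.sqrt (a * (1 - a))) := by
  refine ⟨convex_Icc _ _, ?_⟩
  intro x hx y hy p q hp hq hpq
  simp only [smul_eq_mul]
  have hq' : q = 1 - p := by linarith
  subst hq'
  have hp1 : (0:ℝ) ≤ 1 - p := by linarith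
  have hX : (0:ℝ) ≤ x * (1-x) := by nlinarith [hx.1, hx.2]
  have hY : (0:ℝ) ≤ y * (1-y) := by nlinarith [hy.1, hy.2]
  have key1 : p * (x*(1-x)) + (1-p) * (y*(1-y)) ≤ (p*x+(1-p)*y) * (1 - (p*x+(1-p)*y)) := by
    nlinarith [mul_nonneg (mul_nonneg hp hp1) (sq_nonneg (x - y))]
  have hsX := Real.sq_sqrt hX
  have hsY := Real.sq_sqrt hY
  have h0 : 0 ≤ p * Real.sqrt (x*(1-x)) + (1-p) * Real.sqrt (y*(1-y)) := by
    have := Real.sqrt_nonneg (x*(1-x)); have := Real.sqrt_nonneg (y*(1-y))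
    positivity
  have key2 : (p * Real.sqrt (x*(1-x)) + (1-p) * Real.sqrt (y*(1-y)))^2
      ≤ p * (x*(1-x)) + (1-p) * (y*(1-y)) := by
    nlinarith [mul_nonneg (mul_nonneg hp hp1)
      (sq_nonneg (Real.sqrt (x*(1-x)) - Real.sqrt (y*(1-y)))), hsX, hsY]
  calc p * Real.sqrt (x*(1-x)) + (1-p) * Real.sqrt (y*(1-y))
      = Real.sqrt ((p * Real.sqrt (x*(1-x)) + (1-p) * Real.sqrt (y*(1-y)))^2) :=
        (Real.sqrt_sq h0).symm
    _ ≤ Real.sqrt ((p*x+(1-p)*y) * (1 - (p*x+(1-p)*y))) :=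
        Real.sqrt_le_sqrt (key2.trans key1)

/-- the key pointwise concavity bound -/
lemma concave_pointwise {f : ℝ → ℝ} (hf : ConcaveOn ℝ (Icc (0:ℝ) 1) f) {M Δ g : ℝ}
    (hM0 : 0 < M) (hM1 : M < 1) (hΔ0 : 0 < Δ) (hΔM : Δ ≤ M) (hΔ1 : Δ ≤ 1 - M)
    (hg0 : 0 ≤ g) (hg1 : g ≤ 1) (hgap : g = M ∨ Δ ≤ |g - M|) :
    f g ≤ f M + ((f (M+Δ) - f M) * max (g - M) 0
      - (f M - f (M-Δ)) * max (M - g) 0) / Δ := by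
  have hMic : M ∈ Icc (0:ℝ) 1 := ⟨hM0.le, hM1.le⟩
  have hgic : g ∈ Icc (0:ℝ) 1 := ⟨hg0, hg1⟩
  rcases hgap with rfl | hgap
  · simp
  rcases lt_trichotomy g M with hlt | heq | hgt
  · -- g ≤ M - Δ
    have hd : Δ ≤ M - g := by
      rw [abs_of_nonpos (by linarith)] at hgap; linarith
    have hMg : 0 < M - g := by linarith
    have ht0 : 0 < Δ / (M - g) := by positivity
    have hcombo : (1 - Δ/(M-g)) * M + (Δ/(M-g)) * g = M - Δ := by
      field_simp; ring
    have hconc := hf.2 hMic hgic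
      (show (0:ℝ) ≤ 1 - Δ/(M-g) by rw [sub_nonneg, div_le_one hMg]; exact hd)
      (show (0:ℝ) ≤ Δ/(M-g) from ht0.le)
      (show (1 - Δ/(M-g)) + (Δ/(M-g)) = 1 by ring)
    rw [smul_eq_mul, smul_eq_mul, smul_eq_mul, smul_eq_mul, hcombo] at hconc
    have hconc' := mul_le_mul_of_nonneg_left hconc hMg.le
    have e1 : (M-g) * ((1 - Δ/(M-g)) * f M + (Δ/(M-g)) * f g)
        = (M - g - Δ) * f M + Δ * f g := by
      field_simp
    rw [e1] at hconc'
    have hmax1 : max (g - M) 0 = 0 := max_eq_right (by linarith)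
    have hmax2 : max (M - g) 0 = M - g := max_eq_left (by linarith)
    rw [hmax1, hmax2, ← sub_le_iff_le_add', le_div_iff₀ hΔ0]
    nlinarith [hconc']
  · exfalso; rw [heq, sub_self, abs_zero] at hgap; linarith
  · -- g ≥ M + Δ
    have hd : Δ ≤ g - M := by
      rw [abs_of_nonneg (by linarith)] at hgap; linarith
    have hgM : 0 < g - M := by linarith
    have ht0 : 0 < Δ / (g - M) := by positivity
    have hcombo : (1 - Δ/(g-M)) * M + (Δ/(g-M)) * g = M + Δ := by
      field_simp; ring
    have hconc := hf.2 hMic hgic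
      (show (0:ℝ) ≤ 1 - Δ/(g-M) by rw [sub_nonneg, div_le_one hgM]; exact hd)
      (show (0:ℝ) ≤ Δ/(g-M) from ht0.le)
      (show (1 - Δ/(g-M)) + (Δ/(g-M)) = 1 by ring)
    rw [smul_eq_mul, smul_eq_mul, smul_eq_mul, smul_eq_mul, hcombo] at hconc
    have hconc' := mul_le_mul_of_nonneg_left hconc hgM.le
    have e1 : (g-M) * ((1 - Δ/(g-M)) * f M + (Δ/(g-M)) * f g)
        = (g - M - Δ) * f M + Δ * f g := by
      field_simp
    rw [e1] at hconc'
    have hmax1 : max (g - M) 0 = g - M := max_eq_left (by linarith)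
    have hmax2 : max (M - g) 0 = 0 := max_eq_right (by linarith)
    rw [hmax1, hmax2, ← sub_le_iff_le_add', le_div_iff₀ hΔ0]
    nlinarith [hconc']


section Chain

variable (P : V → V → ℝ) (pi : V → ℝ)

lemma meas_nonneg (hpi0 : ∀ x, 0 < pi x) (A : Finset V) : 0 ≤ meas pi A :=
  Finset.sum_nonneg fun x _ => (hpi0 x).le

lemma meas_le_one (hpi0 : ∀ x, 0 < pi x) (hpi1 : ∑ x, pi x = 1) (A : Finset V) :
    meas pi A ≤ 1 := by
  rw [← hpi1]
  exact Finset.sum_le_sum_of_subset_of_nonneg (Finset.subset_univ A)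
    fun x _ _ => (hpi0 x).le

lemma meas_pos (hpi0 : ∀ x, 0 < pi x) {A : Finset V} (hA : A.Nonempty) : 0 < meas pi A :=
  Finset.sum_pos (fun x _ => hpi0 x) hA

lemma meas_lt_one (hpi0 : ∀ x, 0 < pi x) (hpi1 : ∑ x, pi x = 1) {A : Finset V}
    (hA' : A ≠ Finset.univ) : meas pi A < 1 := by
  obtain ⟨y, hy⟩ : ∃ y, y ∉ A := by
    by_contra h
    push_neg at h
    exact hA' (Finset.eq_univ_iff_forall.mpr h)
  have h1 : meas pi (insert y A) ≤ 1 := meas_le_one pi hpi0 hpi1 _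
  rw [meas, Finset.sum_insert hy] at h1
  have := hpi0 y
  rw [meas]
  linarith

lemma flow_nonneg (hP0 : ∀ x y, 0 ≤ P x y) (hpi0 : ∀ x, 0 < pi x) (A : Finset V) (y : V) :
    0 ≤ flowPt P pi A y :=
  Finset.sum_nonneg fun x _ => mul_nonneg (hpi0 x).le (hP0 x y)

lemma flow_le (hP0 : ∀ x y, 0 ≤ P x y) (hpi0 : ∀ x, 0 < pi x)
    (hstat : ∀ y, ∑ x, pi x * P x y = pi y) (A : Finset V) (y : V) :
    flowPt P pi A y ≤ pi y := by
  rw [← hstat y]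
  exact Finset.sum_le_sum_of_subset_of_nonneg (Finset.subset_univ A)
    fun x _ _ => mul_nonneg (hpi0 x).le (hP0 x y)

lemma meas_evolve_eq (hpi0 : ∀ x, 0 < pi x) (A : Finset V) (u : ℝ) :
    meas pi (evolve P pi A u)
      = ∑ y : V, (Set.Iic (flowPt P pi A y / pi y)).indicator (fun _ => pi y) u := by
  rw [meas, evolve, Finset.sum_filter]
  refine Finset.sum_congr rfl fun y _ => ?_
  by_cases h : u * pi y ≤ flowPt P pi A y
  · rw [if_pos h, Set.indicator_of_mem]
    exact (le_div_iff₀ (hpi0 y)).mpr h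
  · rw [if_neg h, Set.indicator_of_notMem]
    intro hmem
    exact h ((le_div_iff₀ (hpi0 y)).mp hmem)

lemma g_measurable (hpi0 : ∀ x, 0 < pi x) (A : Finset V) :
    Measurable (fun u => meas pi (evolve P pi A u)) := by
  have : (fun u => meas pi (evolve P pi A u))
      = fun u => ∑ y : V, (Set.Iic (flowPt P pi A y / pi y)).indicator (fun _ => pi y) u :=
    funext fun u => meas_evolve_eq P pi hpi0 A u
  rw [this]
  exact Finset.measurable_sum _ fun y _ =>
    Measurable.indicator measurable_const measurableSet_Iic

lemma bdd_interval_integrable (h : ℝ → ℝ) (hm : Measurable h) (C : ℝ)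
    (hb : ∀ u, |h u| ≤ C) : IntervalIntegrable h volume 0 1 := by
  refine (intervalIntegrable_const (c := C)).mono_fun' hm.aestronglyMeasurable ?_
  exact MeasureTheory.ae_of_all _ (fun u => by simpa [Real.norm_eq_abs] using hb u)

lemma integral_indicator_Iic (c k : ℝ) (h0 : 0 ≤ c) (h1 : c ≤ 1) :
    ∫ u in (0:ℝ)..1, (Set.Iic c).indicator (fun _ => k) u = k * c := by
  rw [intervalIntegral.integral_of_le zero_le_one,
    MeasureTheory.integral_indicator measurableSet_Iic,
    Measure.restrict_restrict measurableSet_Iic, MeasureTheory.setIntegral_const]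
  have he : Set.Iic c ∩ Set.Ioc (0:ℝ) 1 = Set.Ioc 0 c := by
    ext t
    simp only [Set.mem_inter_iff, Set.mem_Iic, Set.mem_Ioc]
    constructor
    · rintro ⟨h2, h3, _⟩; exact ⟨h3, h2⟩
    · rintro ⟨h2, h3⟩; exact ⟨h3, h2, le_trans h3 h1⟩
  rw [he, Real.volume_real_Ioc_of_le h0, smul_eq_mul]
  ring

lemma g_mem_Icc (hpi0 : ∀ x, 0 < pi x) (hpi1 : ∑ x, pi x = 1) (A : Finset V) (u : ℝ) :
    meas pi (evolve P pi A u) ∈ Icc (0:ℝ) 1 :=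
  ⟨meas_nonneg pi hpi0 _, meas_le_one pi hpi0 hpi1 _⟩

lemma integral_g (hP0 : ∀ x y, 0 ≤ P x y) (hP1 : ∀ x, ∑ y, P x y = 1)
    (hpi0 : ∀ x, 0 < pi x) (hstat : ∀ y, ∑ x, pi x * P x y = pi y) (A : Finset V) :
    ∫ u in (0:ℝ)..1, meas pi (evolve P pi A u) = meas pi A := by
  have heq : (fun u => meas pi (evolve P pi A u))
      = fun u => ∑ y : V, (Set.Iic (flowPt P pi A y / pi y)).indicator (fun _ => pi y) u :=
    funext fun u => meas_evolve_eq P pi hpi0 A u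
  rw [heq, intervalIntegral.integral_finset_sum]
  · have hterm : ∀ y : V,
        (∫ u in (0:ℝ)..1, (Set.Iic (flowPt P pi A y / pi y)).indicator (fun _ => pi y) u)
          = flowPt P pi A y := by
      intro y
      rw [integral_indicator_Iic _ _
        (div_nonneg (flow_nonneg P pi hP0 hpi0 A y) (hpi0 y).le)
        ((div_le_one (hpi0 y)).mpr (flow_le P pi hP0 hpi0 hstat A y))]
      rw [mul_comm, div_mul_cancel₀ _ (ne_of_gt (hpi0 y))]
    rw [Finset.sum_congr rfl (fun y _ => hterm y)]
    simp only [flowPt, meas]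
    show ∑ y, ∑ x ∈ A, pi x * P x y = ∑ x ∈ A, pi x
    rw [Finset.sum_comm]
    refine Finset.sum_congr rfl fun x _ => ?_
    rw [← Finset.mul_sum, hP1 x, mul_one]
  · intro y _
    refine bdd_interval_integrable _ (Measurable.indicator measurable_const measurableSet_Iic)
      |pi y| (fun u => ?_)
    by_cases h : u ∈ Set.Iic (flowPt P pi A y / pi y)
    · rw [Set.indicator_of_mem h]
    · rw [Set.indicator_of_notMem h, abs_zero]; exact abs_nonneg _

end Chain



section Chain2
variable (P : V → V → ℝ) (pi : V → ℝ)

lemma modFlow_nonneg (A : Finset V) : 0 ≤ modFlow P pi A := by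
  rw [modFlow]
  have : 0 ≤ ∫ u in (0:ℝ)..1, |meas pi (evolve P pi A u) - meas pi A| :=
    intervalIntegral.integral_nonneg zero_le_one (fun u _ => abs_nonneg _)
  linarith

lemma psiMin_nonneg : 0 ≤ psiMin P pi := by
  apply Real.sInf_nonneg
  rintro x ⟨A, _, _, rfl⟩
  exact modFlow_nonneg P pi A

lemma psiMin_le {A : Finset V} (hA : A.Nonempty) (hA' : A ≠ Finset.univ) :
    psiMin P pi ≤ modFlow P pi A := by
  apply csInf_le
  · exact ⟨0, by rintro x ⟨B, _, _, rfl⟩; exact modFlow_nonneg P pi B⟩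
  · exact ⟨A, hA, hA', rfl⟩

lemma deltaMin_le {A B : Finset V} (h : meas pi A ≠ meas pi B) :
    deltaMin pi ≤ |meas pi A - meas pi B| := by
  apply csInf_le
  · exact ⟨0, by rintro x ⟨C, D, _, rfl⟩; exact abs_nonneg _⟩
  · exact ⟨A, B, h, rfl⟩

lemma deltaMin_pos [Nonempty V] (hpi0 : ∀ x, 0 < pi x) : 0 < deltaMin pi := by
  have hfin : {r | ∃ A B : Finset V, meas pi A ≠ meas pi B ∧
      r = |meas pi A - meas pi B|}.Finite := by
    apply Set.Finite.subset (Set.finite_range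
      (fun p : Finset V × Finset V => |meas pi p.1 - meas pi p.2|))
    rintro x ⟨A, B, _, rfl⟩
    exact ⟨(A, B), rfl⟩
  have hne : {r | ∃ A B : Finset V, meas pi A ≠ meas pi B ∧
      r = |meas pi A - meas pi B|}.Nonempty := by
    obtain ⟨x⟩ := ‹Nonempty V›
    refine ⟨|meas pi {x} - meas pi ∅|, {x}, ∅, ?_, rfl⟩
    have h1 : meas pi ∅ = 0 := by simp [meas]
    have h2 : meas pi {x} = pi x := by simp [meas]
    rw [h1, h2]
    exact ne_of_gt (hpi0 x)
  have hmem := hne.csInf_mem hfin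
  obtain ⟨A, B, hne', heq⟩ := hmem
  rw [deltaMin, heq]
  exact abs_pos.mpr (sub_ne_zero.mpr hne')

lemma deltaMin_le_meas [Nonempty V] {A : Finset V} (hA : A.Nonempty)
    (hpi0 : ∀ x, 0 < pi x) : deltaMin pi ≤ meas pi A := by
  have h1 : meas pi ∅ = 0 := by simp [meas]
  have h2 := deltaMin_le pi (A := A) (B := ∅)
    (by rw [h1]; exact ne_of_gt (meas_pos pi hpi0 hA))
  rw [h1, sub_zero, abs_of_pos (meas_pos pi hpi0 hA)] at h2
  exact h2

lemma deltaMin_le_one_sub_meas [Nonempty V] {A : Finset V} (hA' : A ≠ Finset.univ)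
    (hpi0 : ∀ x, 0 < pi x) (hpi1 : ∑ x, pi x = 1) :
    deltaMin pi ≤ 1 - meas pi A := by
  have h1 : meas pi Finset.univ = 1 := hpi1
  have hlt := meas_lt_one pi hpi0 hpi1 hA'
  have h2 := deltaMin_le pi (A := Finset.univ) (B := A) (by rw [h1]; exact ne_of_gt hlt)
  rw [h1, abs_of_pos (by linarith)] at h2
  exact h2

/-- the master bound: for concave `f`, `C_f(A) ≤ 1 - c·Δ·Ψ_min` provided
`c·Δ²·f(M) ≤ 2f(M) - f(M+Δ) - f(M-Δ)`. -/
lemma master [Nonempty V]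
    (hP0 : ∀ x y, 0 ≤ P x y) (hP1 : ∀ x, ∑ y, P x y = 1)
    (hpi0 : ∀ x, 0 < pi x) (hpi1 : ∑ x, pi x = 1)
    (hstat : ∀ y, ∑ x, pi x * P x y = pi y)
    (f : ℝ → ℝ) (hconc : ConcaveOn ℝ (Icc (0:ℝ) 1) f) (hfm : Measurable f)
    (hf0 : ∀ a, 0 ≤ a → a ≤ 1 → 0 ≤ f a) (hf1 : ∀ a, 0 ≤ a → a ≤ 1 → f a ≤ 1)
    {A : Finset V} (hA : A.Nonempty) (hA' : A ≠ Finset.univ)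
    (hfM : 0 < f (meas pi A))
    (c : ℝ) (hc : 0 ≤ c)
    (hS : c * deltaMin pi ^ 2 * f (meas pi A) ≤
      2 * f (meas pi A) - f (meas pi A + deltaMin pi) - f (meas pi A - deltaMin pi)) :
    0 ≤ fCong f P pi A ∧ fCong f P pi A ≤ 1 - c * deltaMin pi * psiMin P pi := by
  set M := meas pi A with hMdef
  set Δ := deltaMin pi with hΔdef
  set g : ℝ → ℝ := fun u => meas pi (evolve P pi A u) with hgdef
  have hM0 : 0 < M := meas_pos pi hpi0 hA
  have hM1 : M < 1 := meas_lt_one pi hpi0 hpi1 hA'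
  have hΔ0 : 0 < Δ := deltaMin_pos pi hpi0
  have hΔM : Δ ≤ M := deltaMin_le_meas pi hA hpi0
  have hΔ1M : Δ ≤ 1 - M := deltaMin_le_one_sub_meas pi hA' hpi0 hpi1
  have hg0 : ∀ u, 0 ≤ g u := fun u => meas_nonneg pi hpi0 _
  have hg1 : ∀ u, g u ≤ 1 := fun u => meas_le_one pi hpi0 hpi1 _
  have hgm : Measurable g := g_measurable P pi hpi0 A
  have hgap : ∀ u, g u = M ∨ Δ ≤ |g u - M| := by
    intro u
    by_cases h : g u = M
    · exact Or.inl h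
    · exact Or.inr (deltaMin_le pi h)
  -- integrability
  have hIg : IntervalIntegrable g volume 0 1 :=
    bdd_interval_integrable _ hgm 1 (fun u => abs_le.mpr ⟨by linarith [hg0 u], hg1 u⟩)
  have hIfg : IntervalIntegrable (fun u => f (g u)) volume 0 1 := by
    refine bdd_interval_integrable _ (hfm.comp hgm) 1 (fun u => abs_le.mpr ⟨?_, ?_⟩)
    · have := hf0 (g u) (hg0 u) (hg1 u); linarith
    · exact hf1 (g u) (hg0 u) (hg1 u)
  have hIplus : IntervalIntegrable (fun u => max (g u - M) 0) volume 0 1 := by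
    refine bdd_interval_integrable _ ((hgm.sub measurable_const).max measurable_const) 1
      (fun u => abs_le.mpr ⟨?_, ?_⟩)
    · have := le_max_right (g u - M) 0; linarith
    · exact max_le (by linarith [hg1 u]) zero_le_one
  have hIminus : IntervalIntegrable (fun u => max (M - g u) 0) volume 0 1 := by
    refine bdd_interval_integrable _ ((measurable_const.sub hgm).max measurable_const) 1
      (fun u => abs_le.mpr ⟨?_, ?_⟩)
    · have := le_max_right (M - g u) 0; linarith
    · exact max_le (by linarith [hg0 u]) zero_le_one
  -- ∫ g = M
  have hintg : ∫ u in (0:ℝ)..1, g u = M := integral_g P pi hP0 hP1 hpi0 hstat A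
  -- ∫ (g-M)₊ = ∫ (M-g)₊ = Ψ_A
  have hptd : ∀ u, max (g u - M) 0 - max (M - g u) 0 = g u - M := by
    intro u
    rcases le_total (g u) M with h | h
    · rw [max_eq_right (by linarith), max_eq_left (by linarith)]; ring
    · rw [max_eq_left (by linarith), max_eq_right (by linarith)]; ring
  have habs : ∀ u, |g u - M| = max (g u - M) 0 + max (M - g u) 0 := by
    intro u
    rcases le_total (g u) M with h | h
    · rw [max_eq_right (by linarith), max_eq_left (by linarith),
        abs_of_nonpos (by linarith)]; ring
    · rw [max_eq_left (by linarith), max_eq_right (by linarith),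
        abs_of_nonneg (by linarith)]; ring
  have hdiff0 : (∫ u in (0:ℝ)..1, max (g u - M) 0) - (∫ u in (0:ℝ)..1, max (M - g u) 0)
      = 0 := by
    rw [← intervalIntegral.integral_sub hIplus hIminus]
    have : (fun u => max (g u - M) 0 - max (M - g u) 0) = fun u => g u - M :=
      funext hptd
    rw [this, intervalIntegral.integral_sub hIg intervalIntegrable_const, hintg,
      intervalIntegral.integral_const]
    simp
  have hsumint : (∫ u in (0:ℝ)..1, max (g u - M) 0) + (∫ u in (0:ℝ)..1, max (M - g u) 0)
      = 2 * modFlow P pi A := by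
    rw [← intervalIntegral.integral_add hIplus hIminus]
    have : (fun u => max (g u - M) 0 + max (M - g u) 0) = fun u => |g u - M| :=
      funext (fun u => (habs u).symm)
    rw [this, modFlow]
    ring
  have hplusint : (∫ u in (0:ℝ)..1, max (g u - M) 0) = modFlow P pi A := by linarith
  have hminusint : (∫ u in (0:ℝ)..1, max (M - g u) 0) = modFlow P pi A := by linarith
  -- pointwise bound and integration
  have hpt : ∀ u ∈ Icc (0:ℝ) 1, f (g u) ≤ f M + ((f (M+Δ) - f M) * max (g u - M) 0
      - (f M - f (M-Δ)) * max (M - g u) 0) / Δ := fun u _ =>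
    concave_pointwise hconc hM0 hM1 hΔ0 hΔM hΔ1M (hg0 u) (hg1 u) (hgap u)
  have hIR : IntervalIntegrable (fun u => f M + ((f (M+Δ) - f M) * max (g u - M) 0
      - (f M - f (M-Δ)) * max (M - g u) 0) / Δ) volume 0 1 :=
    intervalIntegrable_const.add
      (((hIplus.const_mul _).sub (hIminus.const_mul _)).div_const _)
  have hmono := intervalIntegral.integral_mono_on zero_le_one hIfg hIR hpt
  have hRint : ∫ u in (0:ℝ)..1, (f M + ((f (M+Δ) - f M) * max (g u - M) 0
      - (f M - f (M-Δ)) * max (M - g u) 0) / Δ)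
      = f M + ((f (M+Δ) - f M) * modFlow P pi A
        - (f M - f (M-Δ)) * modFlow P pi A) / Δ := by
    rw [intervalIntegral.integral_add intervalIntegrable_const
      (((hIplus.const_mul _).sub (hIminus.const_mul _)).div_const _),
      intervalIntegral.integral_const, intervalIntegral.integral_div,
      intervalIntegral.integral_sub (hIplus.const_mul _) (hIminus.const_mul _),
      intervalIntegral.integral_const_mul, intervalIntegral.integral_const_mul,
      hplusint, hminusint]
    simp
  rw [hRint] at hmono
  -- conclude
  have hΨA : psiMin P pi ≤ modFlow P pi A := psiMin_le P pi hA hA'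
  have hΨ0 : 0 ≤ psiMin P pi := psiMin_nonneg P pi
  have hSpos : 0 ≤ 2 * f M - f (M+Δ) - f (M-Δ) := by
    have : 0 ≤ c * Δ^2 * f M := by positivity
    linarith [hS]
  have key : c * Δ * psiMin P pi * f M ≤
      (2 * f M - f (M+Δ) - f (M-Δ)) * modFlow P pi A / Δ := by
    rw [le_div_iff₀ hΔ0]
    calc c * Δ * psiMin P pi * f M * Δ = (c * Δ^2 * f M) * psiMin P pi := by ring
      _ ≤ (2 * f M - f (M+Δ) - f (M-Δ)) * psiMin P pi :=
          mul_le_mul_of_nonneg_right hS hΨ0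
      _ ≤ (2 * f M - f (M+Δ) - f (M-Δ)) * modFlow P pi A :=
          mul_le_mul_of_nonneg_left hΨA hSpos
  have he : ((f (M+Δ) - f M) * modFlow P pi A - (f M - f (M-Δ)) * modFlow P pi A) / Δ
      = -((2 * f M - f (M+Δ) - f (M-Δ)) * modFlow P pi A / Δ) := by ring
  rw [he] at hmono
  have hfinal : (∫ u in (0:ℝ)..1, f (g u)) ≤ f M - c * Δ * psiMin P pi * f M := by
    linarith [hmono, key]
  have hgoal2 : fCong f P pi A = (∫ u in (0:ℝ)..1, f (g u)) / f M := rfl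
  constructor
  · rw [hgoal2]
    exact div_nonneg (intervalIntegral.integral_nonneg zero_le_one
      fun u _ => hf0 _ (hg0 u) (hg1 u)) hfM.le
  · rw [hgoal2, div_le_iff₀ hfM]
    nlinarith [hfinal]




/-- six scalar wrappers -/
lemma hS1a {M Δ : ℝ} (hM0 : 0 < M) (hM1 : M < 1) (hΔ0 : 0 < Δ) (hΔM : Δ ≤ M)
    (hΔ1 : Δ ≤ 1 - M) :
    8 * Δ^2 * (M*(1-M)) ≤ 2*(M*(1-M)) - ((M+Δ)*(1-(M+Δ))) - ((M-Δ)*(1-(M-Δ))) := by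
  nlinarith [mul_nonneg (sq_nonneg Δ) (sq_nonneg (1-2*M))]

lemma hS1b {M Δ r : ℝ} (hM0 : 0 < M) (hM1 : M < 1) (hΔ0 : 0 < Δ) (hΔM : Δ ≤ M)
    (hΔ1 : Δ ≤ 1 - M) (hMr : M ≤ r) (hr12 : r ≤ 1/2) :
    2/(r*(1-r)) * Δ^2 * (M*(1-M))
      ≤ 2*(M*(1-M)) - ((M+Δ)*(1-(M+Δ))) - ((M-Δ)*(1-(M-Δ))) := by
  have hr0 : 0 < r := lt_of_lt_of_le hM0 hMr
  have hrr : 0 < r*(1-r) := by nlinarith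
  have hMM : M*(1-M) ≤ r*(1-r) := by nlinarith
  have h2 : (M*(1-M))/(r*(1-r)) ≤ 1 := by rw [div_le_one hrr]; exact hMM
  have e : 2/(r*(1-r)) * Δ^2 * (M*(1-M)) = 2*Δ^2 * ((M*(1-M))/(r*(1-r))) := by ring
  rw [e]
  calc 2*Δ^2 * ((M*(1-M))/(r*(1-r))) ≤ 2*Δ^2 * 1 :=
        mul_le_mul_of_nonneg_left h2 (by positivity)
    _ = 2*Δ^2 := by ring
    _ ≤ 2*(M*(1-M)) - ((M+Δ)*(1-(M+Δ))) - ((M-Δ)*(1-(M-Δ))) := by nlinarith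

lemma hS2a {M Δ : ℝ} (hM0 : 0 < M) (hM1 : M < 1) (hΔ0 : 0 < Δ) (hΔM : Δ ≤ M)
    (hΔ1 : Δ ≤ 1 - M) :
    Real.exp 1 * Δ^2 * (M*Real.log (1/M))
      ≤ 2*(M*Real.log (1/M)) - ((M+Δ)*Real.log (1/(M+Δ)))
        - ((M-Δ)*Real.log (1/(M-Δ))) := by
  refine le_trans ?_ (scalar2core hM0 hM1 hΔ0 hΔM hΔ1)
  have hM2 := mul_log_inv_le_inv_e (x := M^2) (by positivity)
  have hlog2 : Real.log (1/M^2) = 2 * Real.log (1/M) := by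
    rw [show (1:ℝ)/M^2 = (1/M)^2 by ring, Real.log_pow]
    norm_num
  rw [hlog2] at hM2
  rw [le_div_iff₀ (by positivity : (0:ℝ) < 2*M)]
  have hee : Real.exp 1 * (Real.exp 1)⁻¹ = 1 := mul_inv_cancel₀ (Real.exp_ne_zero 1)
  have h3 := mul_le_mul_of_nonneg_left hM2 (by positivity : (0:ℝ) ≤ Real.exp 1 * Δ^2)
  calc Real.exp 1 * Δ^2 * (M*Real.log (1/M)) * (2*M)
      = (Real.exp 1 * Δ^2) * (M^2 * (2*Real.log (1/M))) := by ring
    _ ≤ (Real.exp 1 * Δ^2) * (Real.exp 1)⁻¹ := h3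
    _ = Δ^2 * (Real.exp 1 * (Real.exp 1)⁻¹) := by ring
    _ = Δ^2 := by rw [hee, mul_one]

lemma hS2b {M Δ r : ℝ} (hM0 : 0 < M) (hM1 : M < 1) (hΔ0 : 0 < Δ) (hΔM : Δ ≤ M)
    (hΔ1 : Δ ≤ 1 - M) (hMr : M ≤ r) (hrexp : r ≤ Real.exp (-(1/2))) :
    1/(2*r^2*Real.log (1/r)) * Δ^2 * (M*Real.log (1/M))
      ≤ 2*(M*Real.log (1/M)) - ((M+Δ)*Real.log (1/(M+Δ)))
        - ((M-Δ)*Real.log (1/(M-Δ))) := by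
  refine le_trans ?_ (scalar2core hM0 hM1 hΔ0 hΔM hΔ1)
  have hr0 : 0 < r := lt_of_lt_of_le hM0 hMr
  have hr1 : r < 1 := lt_of_le_of_lt hrexp (by
    rw [show (1:ℝ) = Real.exp 0 by rw [Real.exp_zero]]
    exact Real.exp_lt_exp.mpr (by norm_num))
  have hLr : 0 < Real.log (1/r) := by
    rw [one_div, Real.log_inv]
    linarith [Real.log_neg hr0 hr1]
  have hmono := sq_mul_log_inv_mono hM0 hMr hrexp
  have hLM : 0 ≤ Real.log (1/M) := by
    rw [one_div, Real.log_inv]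
    linarith [Real.log_neg hM0 hM1]
  have e : 1/(2*r^2*Real.log (1/r)) * Δ^2 * (M*Real.log (1/M))
      = Δ^2*(M*Real.log (1/M))/(2*r^2*Real.log (1/r)) := by ring
  rw [e, div_le_div_iff₀ (by
      have : (0:ℝ) < 2*r^2 := by positivity
      calc (0:ℝ) < (2*r^2) * Real.log (1/r) := mul_pos this hLr
        _ = 2*r^2*Real.log (1/r) := by ring)
    (by positivity : (0:ℝ) < 2*M)]
  nlinarith [mul_le_mul_of_nonneg_left hmono (by positivity : (0:ℝ) ≤ 2*Δ^2)]

lemma hS3a {M Δ r : ℝ} (hM0 : 0 < M) (hM1 : M < 1) (hΔ0 : 0 < Δ) (hΔM : Δ ≤ M)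
    (hΔ1 : Δ ≤ 1 - M) (hMr : M ≤ r) (hr12 : r ≤ 1/2) :
    1/(4*r^2*(1-r)^2) * Δ^2 * Real.sqrt (M*(1-M))
      ≤ 2*Real.sqrt (M*(1-M)) - Real.sqrt ((M+Δ)*(1-(M+Δ)))
        - Real.sqrt ((M-Δ)*(1-(M-Δ))) := by
  have hcore := scalar3core hM0 hM1 hΔ0 hΔM hΔ1
  have hr0 : 0 < r := lt_of_lt_of_le hM0 hMr
  have hr1' : (0:ℝ) < 1 - r := by linarith
  have hMM0 : (0:ℝ) < M*(1-M) := by nlinarith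
  have hs0 : 0 < Real.sqrt (M*(1-M)) := Real.sqrt_pos.mpr hMM0
  have hs2 : Real.sqrt (M*(1-M))^2 = M*(1-M) := Real.sq_sqrt hMM0.le
  have h43 : (0:ℝ) < 4*Real.sqrt (M*(1-M))^3 := by positivity
  have hMM : M*(1-M) ≤ r*(1-r) := by nlinarith
  have hineq : (1/(4*r^2*(1-r)^2) * Δ^2 * Real.sqrt (M*(1-M)))
      * (4*Real.sqrt (M*(1-M))^3) ≤ Δ^2 := by
    have hs4 : Real.sqrt (M*(1-M))^4 = (M*(1-M))^2 := by
      rw [show Real.sqrt (M*(1-M))^4 = (Real.sqrt (M*(1-M))^2)^2 by ring, hs2]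
    have e : (1/(4*r^2*(1-r)^2) * Δ^2 * Real.sqrt (M*(1-M)))
        * (4*Real.sqrt (M*(1-M))^3)
        = Δ^2 * ((M*(1-M))^2 / (r^2*(1-r)^2)) := by
      rw [show (1/(4*r^2*(1-r)^2) * Δ^2 * Real.sqrt (M*(1-M)))
          * (4*Real.sqrt (M*(1-M))^3)
          = Δ^2 * (Real.sqrt (M*(1-M))^4 / (r^2*(1-r)^2)) by
        field_simp]
      rw [hs4]
    rw [e]
    have hq : (M*(1-M))^2/(r^2*(1-r)^2) ≤ 1 := by
      rw [div_le_one (by positivity)]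
      nlinarith [mul_self_le_mul_self hMM0.le hMM]
    calc Δ^2 * ((M*(1-M))^2 / (r^2*(1-r)^2)) ≤ Δ^2 * 1 :=
          mul_le_mul_of_nonneg_left hq (sq_nonneg Δ)
      _ = Δ^2 := mul_one _
  calc 1/(4*r^2*(1-r)^2) * Δ^2 * Real.sqrt (M*(1-M))
      ≤ Δ^2/(4*Real.sqrt (M*(1-M))^3) := by rw [le_div_iff₀ h43]; exact hineq
    _ ≤ 2*Real.sqrt (M*(1-M)) - Real.sqrt ((M+Δ)*(1-(M+Δ)))
        - Real.sqrt ((M-Δ)*(1-(M-Δ))) := by rw [div_le_iff₀ h43]; exact hcore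


lemma piStar_pos [Nonempty V] (pi : V → ℝ) (hpi0 : ∀ x, 0 < pi x) : 0 < piStar pi := by
  obtain ⟨x₀, hx₀⟩ : ∃ x₀ : V, ∀ y, pi x₀ ≤ pi y := Finite.exists_min pi
  have hstar : piStar pi = pi x₀ := by
    apply le_antisymm
    · exact ciInf_le (Set.Finite.bddBelow (Set.finite_range pi)) x₀
    · exact le_ciInf hx₀
  rw [hstar]
  exact hpi0 x₀

lemma fCongR_bound [Nonempty V] (hcard : 2 ≤ Fintype.card V)
    {r : ℝ} (hr1 : piStar pi ≤ r)
    (f : ℝ → ℝ) (T : ℝ)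
    (hall : ∀ A : Finset V, A.Nonempty → A ≠ Finset.univ → meas pi A ≤ r →
      0 ≤ fCong f P pi A ∧ fCong f P pi A ≤ 1 - T) :
    T ≤ 1 - fCongR f P pi r := by
  obtain ⟨x₀, hx₀⟩ : ∃ x₀ : V, ∀ y, pi x₀ ≤ pi y := Finite.exists_min pi
  have hstar : piStar pi = pi x₀ := by
    apply le_antisymm
    · exact ciInf_le (Set.Finite.bddBelow (Set.finite_range pi)) x₀
    · exact le_ciInf hx₀
  have hmeas : meas pi {x₀} = pi x₀ := by simp [meas]
  have hA0ne : ({x₀} : Finset V) ≠ Finset.univ := by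
    intro h
    have h1 : (Finset.univ : Finset V).card = 1 := by
      rw [← h]; exact Finset.card_singleton x₀
    rw [Finset.card_univ] at h1
    omega
  have h0 := hall {x₀} (Finset.singleton_nonempty x₀) hA0ne
    (by rw [hmeas, ← hstar]; exact hr1)
  have hb : 0 ≤ 1 - T := le_trans h0.1 h0.2
  have hsup : fCongR f P pi r ≤ 1 - T := by
    apply Real.sSup_le _ hb
    rintro x ⟨A, h1, h2, h3, rfl⟩
    exact (hall A h1 h2 h3).2
  linarith


section Props

lemma f1_meas : Measurable (fun a : ℝ => a * (1 - a)) :=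
  measurable_id.mul (measurable_const.sub measurable_id)

lemma f1_nonneg : ∀ a : ℝ, 0 ≤ a → a ≤ 1 → 0 ≤ a * (1 - a) :=
  fun a h0 h1 => mul_nonneg h0 (by linarith)

lemma f1_le_one : ∀ a : ℝ, 0 ≤ a → a ≤ 1 → a * (1 - a) ≤ 1 :=
  fun a h0 h1 => by nlinarith

lemma f2_meas : Measurable (fun a : ℝ => a * Real.log (1/a)) :=
  measurable_id.mul (Real.measurable_log.comp (measurable_const.div measurable_id))

lemma f2_nonneg : ∀ a : ℝ, 0 ≤ a → a ≤ 1 → 0 ≤ a * Real.log (1/a) := by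
  intro a h0 h1
  rcases eq_or_lt_of_le h0 with rfl | ha
  · simp
  · refine mul_nonneg h0 ?_
    rw [one_div, Real.log_inv]
    linarith [Real.log_nonpos h0 h1]

lemma f2_le_one : ∀ a : ℝ, 0 ≤ a → a ≤ 1 → a * Real.log (1/a) ≤ 1 := by
  intro a h0 h1
  rcases eq_or_lt_of_le h0 with rfl | ha
  · simp
  · have hlog : Real.log (1/a) ≤ 1/a - 1 :=
      Real.log_le_sub_one_of_pos (by positivity)
    have h2 := mul_le_mul_of_nonneg_left hlog h0
    have h3 : a * (1/a) = 1 := by field_simp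
    nlinarith

lemma f3_meas : Measurable (fun a : ℝ => Real.sqrt (a * (1 - a))) :=
  Real.continuous_sqrt.measurable.comp f1_meas

lemma f3_nonneg : ∀ a : ℝ, 0 ≤ a → a ≤ 1 → 0 ≤ Real.sqrt (a * (1 - a)) :=
  fun a _ _ => Real.sqrt_nonneg _

lemma f3_le_one : ∀ a : ℝ, 0 ≤ a → a ≤ 1 → Real.sqrt (a * (1 - a)) ≤ 1 :=
  fun a h0 h1 => Real.sqrt_le_one.mpr (by nlinarith)

end Props


end Chain2

/-- Lower bounds on `1 − C_f(r)` for `f₁(a) = a(1−a)`, `f₂(a) = a log(1/a)`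
and `f₃(a) = √(a(1−a))`, in terms of `Δ_min` and `Ψ_min`. -/
theorem stmt15 {V : Type*} [Fintype V] [Nonempty V] (P : V → V → ℝ) (pi : V → ℝ)
    (hP0 : ∀ x y, 0 ≤ P x y) (hP1 : ∀ x, ∑ y, P x y = 1)
    (hirr : ∀ x y : V, ∃ t : ℕ, 0 < (Matrix.of P ^ t) x y)
    (hpi0 : ∀ x, 0 < pi x) (hpi1 : ∑ x, pi x = 1)
    (hstat : ∀ y, ∑ x, pi x * P x y = pi y)
    (hcard : 2 ≤ Fintype.card V)
    (r : ℝ) (hr1 : piStar pi ≤ r) (hr2 : r < 1) :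
    (8 * deltaMin pi * psiMin P pi ≤
        1 - fCongR (fun a => a * (1 - a)) P pi r) ∧
    (r ≤ 1 / 2 →
      2 * deltaMin pi * psiMin P pi / (r * (1 - r)) ≤
        1 - fCongR (fun a => a * (1 - a)) P pi r) ∧
    (Real.exp 1 * deltaMin pi * psiMin P pi ≤
        1 - fCongR (fun a => a * Real.log (1 / a)) P pi r) ∧
    (r ≤ Real.exp (-(1 / 2)) →
      deltaMin pi * psiMin P pi / (2 * r ^ 2 * Real.log (1 / r)) ≤
        1 - fCongR (fun a => a * Real.log (1 / a)) P pi r) ∧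
    (r ≤ 1 / 2 →
      deltaMin pi * psiMin P pi / (4 * r ^ 2 * (1 - r) ^ 2) ≤
        1 - fCongR (fun a => Real.sqrt (a * (1 - a))) P pi r) ∧
    (1 / 2 < r →
      4 * deltaMin pi * psiMin P pi ≤
        1 - fCongR (fun a => Real.sqrt (a * (1 - a))) P pi r) := by
  have hr0 : 0 < r := lt_of_lt_of_le (piStar_pos pi hpi0) hr1
  have facts : ∀ A : Finset V, A.Nonempty → A ≠ Finset.univ →
      0 < meas pi A ∧ meas pi A < 1 ∧ 0 < deltaMin pi ∧ deltaMin pi ≤ meas pi A ∧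
        deltaMin pi ≤ 1 - meas pi A := fun A h1 h2 =>
    ⟨meas_pos pi hpi0 h1, meas_lt_one pi hpi0 hpi1 h2, deltaMin_pos pi hpi0,
      deltaMin_le_meas pi h1 hpi0, deltaMin_le_one_sub_meas pi h2 hpi0 hpi1⟩
  refine ⟨?_, fun hr12 => ?_, ?_, fun hrexp => ?_, fun hr12 => ?_, fun hr12 => ?_⟩
  · -- (i-a)
    apply fCongR_bound P pi hcard hr1
    intro A h1 h2 h3
    obtain ⟨hM0, hM1, hΔ0, hΔM, hΔ1M⟩ := facts A h1 h2
    exact master P pi hP0 hP1 hpi0 hpi1 hstat _ concave_f1 f1_meas f1_nonneg f1_le_one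
      h1 h2 (mul_pos hM0 (by linarith)) 8 (by norm_num)
      (hS1a hM0 hM1 hΔ0 hΔM hΔ1M)
  · -- (i-b)
    have key := fCongR_bound P pi hcard hr1 (fun a => a * (1 - a))
      (2/(r*(1-r)) * deltaMin pi * psiMin P pi) ?_
    · have heq : 2 * deltaMin pi * psiMin P pi / (r * (1 - r))
          = 2/(r*(1-r)) * deltaMin pi * psiMin P pi := by ring
      rw [heq]
      exact key
    · intro A h1 h2 h3
      obtain ⟨hM0, hM1, hΔ0, hΔM, hΔ1M⟩ := facts A h1 h2
      exact master P pi hP0 hP1 hpi0 hpi1 hstat _ concave_f1 f1_meas f1_nonneg f1_le_one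
        h1 h2 (mul_pos hM0 (by linarith)) (2/(r*(1-r)))
        (le_of_lt (div_pos (by norm_num) (by nlinarith)))
        (hS1b hM0 hM1 hΔ0 hΔM hΔ1M h3 hr12)
  · -- (ii-a)
    apply fCongR_bound P pi hcard hr1
    intro A h1 h2 h3
    obtain ⟨hM0, hM1, hΔ0, hΔM, hΔ1M⟩ := facts A h1 h2
    have hfM : 0 < meas pi A * Real.log (1 / meas pi A) := by
      refine mul_pos hM0 ?_
      rw [one_div, Real.log_inv]
      linarith [Real.log_neg hM0 hM1]
    exact master P pi hP0 hP1 hpi0 hpi1 hstat _ concave_f2 f2_meas f2_nonneg f2_le_one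
      h1 h2 hfM (Real.exp 1) (Real.exp_pos 1).le
      (hS2a hM0 hM1 hΔ0 hΔM hΔ1M)
  · -- (ii-b)
    have hLr : 0 < Real.log (1/r) := by
      rw [one_div, Real.log_inv]
      linarith [Real.log_neg hr0 hr2]
    have key := fCongR_bound P pi hcard hr1 (fun a => a * Real.log (1 / a))
      (1/(2*r^2*Real.log (1/r)) * deltaMin pi * psiMin P pi) ?_
    · have heq : deltaMin pi * psiMin P pi / (2 * r ^ 2 * Real.log (1 / r))
          = 1/(2*r^2*Real.log (1/r)) * deltaMin pi * psiMin P pi := by ring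
      rw [heq]
      exact key
    · intro A h1 h2 h3
      obtain ⟨hM0, hM1, hΔ0, hΔM, hΔ1M⟩ := facts A h1 h2
      have hfM : 0 < meas pi A * Real.log (1 / meas pi A) := by
        refine mul_pos hM0 ?_
        rw [one_div, Real.log_inv]
        linarith [Real.log_neg hM0 hM1]
      refine master P pi hP0 hP1 hpi0 hpi1 hstat _ concave_f2 f2_meas f2_nonneg f2_le_one
        h1 h2 hfM (1/(2*r^2*Real.log (1/r))) ?_ (hS2b hM0 hM1 hΔ0 hΔM hΔ1M h3 hrexp)
      · have : 0 < 2*r^2*Real.log (1/r) := by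
          have h2r : (0:ℝ) < 2*r^2 := by positivity
          calc (0:ℝ) < (2*r^2) * Real.log (1/r) := mul_pos h2r hLr
            _ = 2*r^2*Real.log (1/r) := by ring
        positivity
  · -- (iii-a)
    have key := fCongR_bound P pi hcard hr1 (fun a => Real.sqrt (a * (1 - a)))
      (1/(4*r^2*(1-r)^2) * deltaMin pi * psiMin P pi) ?_
    · have heq : deltaMin pi * psiMin P pi / (4 * r ^ 2 * (1 - r) ^ 2)
          = 1/(4*r^2*(1-r)^2) * deltaMin pi * psiMin P pi := by ring
      rw [heq]
      exact key
    · intro A h1 h2 h3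
      obtain ⟨hM0, hM1, hΔ0, hΔM, hΔ1M⟩ := facts A h1 h2
      have hfM : 0 < Real.sqrt (meas pi A * (1 - meas pi A)) :=
        Real.sqrt_pos.mpr (mul_pos hM0 (by linarith))
      refine master P pi hP0 hP1 hpi0 hpi1 hstat _ concave_f3 f3_meas f3_nonneg f3_le_one
        h1 h2 hfM (1/(4*r^2*(1-r)^2)) (by positivity)
        (hS3a hM0 hM1 hΔ0 hΔM hΔ1M h3 hr12)
  · -- (iii-b)
    apply fCongR_bound P pi hcard hr1
    intro A h1 h2 h3
    obtain ⟨hM0, hM1, hΔ0, hΔM, hΔ1M⟩ := facts A h1 h2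
    have hfM : 0 < Real.sqrt (meas pi A * (1 - meas pi A)) :=
      Real.sqrt_pos.mpr (mul_pos hM0 (by linarith))
    exact master P pi hP0 hP1 hpi0 hpi1 hstat _ concave_f3 f3_meas f3_nonneg f3_le_one
      h1 h2 hfM 4 (by norm_num)
      (scalar3b hM0 hM1 hΔ0 hΔM hΔ1M)


end Stmt15
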